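/- For all real numbers p > 0 and q > 0, ∫_0^1 (x^{p-1}/ln x + x^{q-1}/(1-x)) dx = ln p - ψ(q). -/

import Mathlib

open MeasureTheory Real intervalIntegral

/-- The digamma function `ψ(x) = Γ'(x)/Γ(x)`. -/
noncomputable def digamma (x : ℝ) : ℝ := deriv Real.Gamma x / Real.Gamma x

open Set Filter Topology
open scoped Interval

namespace DigammaAux

lemma exp_neg_le_inv {u : ℝ} (hu : 0 ≤ u) : exp (-u) ≤ 1 / (1 + u) := by
  rw [le_div_iff₀ (by linarith)]
  calc exp (-u) * (1 + u) ≤ exp (-u) * exp u := by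
        have := add_one_le_exp u
        nlinarith [exp_pos (-u)]
    _ = 1 := by rw [← exp_add]; simp

lemma one_sub_exp_neg_ge {u : ℝ} (hu : 0 ≤ u) : u * exp (-u) ≤ 1 - exp (-u) := by
  have h := add_one_le_exp u
  have h2 : exp (-u) * exp u = 1 := by rw [← exp_add]; simp
  nlinarith [exp_pos (-u)]

lemma one_sub_exp_neg_le {u : ℝ} : 1 - exp (-u) ≤ u := by
  have := add_one_le_exp (-u); linarith

lemma abs_exp_neg_sub_exp_neg {a b : ℝ} (ha : 0 ≤ a) (hb : 0 ≤ b) :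
    |exp (-a) - exp (-b)| ≤ |a - b| := by
  wlog hab : a ≤ b generalizing a b
  · rw [abs_sub_comm, abs_sub_comm a b]; exact this hb ha (by linarith)
  have h1 : exp (-a) - exp (-b) = exp (-a) * (1 - exp (-(b - a))) := by
    rw [mul_sub, mul_one, ← exp_add]; ring_nf
  have h2 : exp (-(b-a)) ≤ 1 := exp_le_one_iff.mpr (by linarith)
  have h3 : 1 - exp (-(b-a)) ≤ b - a := one_sub_exp_neg_le
  have h4 : exp (-a) ≤ 1 := exp_le_one_iff.mpr (by linarith)
  rw [abs_of_nonneg (by nlinarith [exp_pos (-a)]), abs_sub_comm,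
    abs_of_nonneg (by linarith : (0:ℝ) ≤ b - a), h1]
  nlinarith [exp_pos (-a), exp_pos (-(b-a))]

lemma log_add_one_le {u : ℝ} (hu : 0 ≤ u) : Real.log (1 + u) ≤ u := by
  have := Real.log_le_sub_one_of_pos (show (0:ℝ) < 1 + u by linarith)
  linarith

lemma le_log_add_one {u : ℝ} (hu : 0 ≤ u) : u / (1 + u) ≤ Real.log (1 + u) := by
  have h0 : (0:ℝ) < 1 + u := by linarith
  have := Real.log_le_sub_one_of_pos (show (0:ℝ) < (1+u)⁻¹ by positivity)
  rw [Real.log_inv] at this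
  have : -(1 + u)⁻¹ + 1 ≤ Real.log (1 + u) := by linarith
  calc u / (1+u) = -(1+u)⁻¹ + 1 := by field_simp; ring
    _ ≤ _ := this

lemma log_add_one_pos {u : ℝ} (hu : 0 < u) : 0 < Real.log (1 + u) :=
  Real.log_pos (by linarith)

/-- difference of tail integrals is an interval integral -/
lemma integral_Ioi_sub_Ioi {φ : ℝ → ℝ} {b c : ℝ} (hb : 0 < b) (hc : 0 < c)
    (h : IntegrableOn φ (Ioi (min b c))) :
    (∫ x in Ioi b, φ x) - ∫ x in Ioi c, φ x = ∫ x in b..c, φ x := by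
  wlog hbc : b ≤ c generalizing b c
  · have := this hc hb (by rwa [min_comm]) (by linarith)
    rw [intervalIntegral.integral_symm]; linarith
  rw [min_eq_left hbc] at h
  have h1 : IntegrableOn φ (Ioc b c) := h.mono_set Ioc_subset_Ioi_self
  have h2 : IntegrableOn φ (Ioi c) := h.mono_set (Ioi_subset_Ioi hbc)
  rw [intervalIntegral.integral_of_le hbc, ← Ioc_union_Ioi_eq_Ioi hbc,
    setIntegral_union (Ioc_disjoint_Ioi le_rfl) measurableSet_Ioi h1 h2]
  ring

lemma tendsto_integral_Ioi_seq {f : ℝ → ℝ} (hf : IntegrableOn f (Ioi (0:ℝ))) :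
    Tendsto (fun n : ℕ => ∫ x in Ioi (1 / ((n:ℝ) + 1)), f x) atTop
      (𝓝 (∫ x in Ioi (0:ℝ), f x)) := by
  have hU : (⋃ n : ℕ, Ioi (1 / ((n:ℝ) + 1))) = Ioi (0:ℝ) := by
    ext x
    simp only [mem_iUnion, mem_Ioi]
    constructor
    · rintro ⟨n, hn⟩; exact lt_trans (by positivity) hn
    · intro hx; obtain ⟨n, hn⟩ := exists_nat_one_div_lt hx; exact ⟨n, hn⟩
  have := tendsto_setIntegral_of_monotone (μ := volume) (f := f)
    (s := fun n : ℕ => Ioi (1 / ((n:ℝ) + 1)))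
    (fun n => measurableSet_Ioi)
    (fun n m hnm => Ioi_subset_Ioi (by
      have : ((n:ℝ)+1) ≤ ((m:ℝ)+1) := by exact_mod_cast by omega
      exact one_div_le_one_div_of_le (by positivity) this))
    (by rwa [hU])
  rwa [hU] at this

/-- integrable on `Ioi 0` given boundedness near 0 and an integrable majorant at infinity -/
lemma integrableOn_Ioi_of_bounds {f g : ℝ → ℝ}
    (hm : AEStronglyMeasurable f (volume.restrict (Ioi (0:ℝ)))) {C : ℝ}
    (h1 : ∀ u ∈ Ioc (0:ℝ) 1, |f u| ≤ C)
    (hg : IntegrableOn g (Ioi (1:ℝ)))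
    (h2 : ∀ u ∈ Ioi (1:ℝ), |f u| ≤ g u) : IntegrableOn f (Ioi (0:ℝ)) := by
  rw [← Ioc_union_Ioi_eq_Ioi (zero_le_one (α := ℝ)), integrableOn_union]
  constructor
  · refine Integrable.mono' (integrable_const C) (hm.mono_set Ioc_subset_Ioi_self) ?_
    filter_upwards [ae_restrict_mem measurableSet_Ioc] with u hu
    simpa [Real.norm_eq_abs] using h1 u hu
  · refine Integrable.mono' hg (hm.mono_set (Ioi_subset_Ioi zero_le_one)) ?_
    filter_upwards [ae_restrict_mem measurableSet_Ioi] with u hu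
    simpa [Real.norm_eq_abs] using h2 u hu

lemma image_exp_neg_Ioi : (fun u : ℝ => exp (-u)) '' Ioi 0 = Ioo (0:ℝ) 1 := by
  ext x
  simp only [mem_image, mem_Ioi, mem_Ioo]
  constructor
  · rintro ⟨u, hu, rfl⟩
    exact ⟨exp_pos _, exp_lt_one_iff.mpr (by linarith)⟩
  · rintro ⟨hx0, hx1⟩
    exact ⟨-Real.log x, by simpa using Real.log_neg hx0 hx1, by simp [Real.exp_log hx0]⟩

/-- CV `x = exp (-u)` -/
lemma cv_exp_neg (g : ℝ → ℝ) :
    ∫ x in Ioo (0:ℝ) 1, g x = ∫ u in Ioi (0:ℝ), exp (-u) * g (exp (-u)) := by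
  rw [← image_exp_neg_Ioi,
    integral_image_eq_integral_abs_deriv_smul (f := fun u : ℝ => exp (-u)) measurableSet_Ioi
      (f' := fun u => -exp (-u))
      (fun x _ => by
        simpa using ((hasDerivAt_neg x).exp).hasDerivWithinAt (s := Ioi (0:ℝ)))
      (fun a _ b _ h => by
        have := Real.exp_injective h; linarith) g]
  refine setIntegral_congr_fun measurableSet_Ioi fun u _ => ?_
  rw [abs_neg, abs_of_pos (exp_pos _)]; simp [smul_eq_mul]

/-- CV `v = a * u` -/
lemma cv_const_mul {a : ℝ} (ha : 0 < a) (ε : ℝ) (g : ℝ → ℝ) :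
    ∫ v in Ioi (a * ε), g v = ∫ u in Ioi ε, a * g (a * u) := by
  have himg : (fun u : ℝ => a * u) '' Ioi ε = Ioi (a * ε) := by
    ext x
    simp only [mem_image, mem_Ioi]
    constructor
    · rintro ⟨u, hu, rfl⟩; exact (mul_lt_mul_iff_right₀ ha).mpr hu
    · intro hx; exact ⟨x / a, by rw [lt_div_iff₀ ha, mul_comm]; linarith, by field_simp⟩
  rw [← himg,
    integral_image_eq_integral_abs_deriv_smul (f := fun u : ℝ => a * u) measurableSet_Ioi
      (f' := fun _ => a)
      (fun x _ => by
        simpa using ((hasDerivAt_id x).const_mul a).hasDerivWithinAt (s := Ioi ε))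
      (fun u _ v _ h => by
        exact mul_left_cancel₀ ha.ne' h) g]
  refine setIntegral_congr_fun measurableSet_Ioi fun u _ => ?_
  rw [abs_of_pos ha]; simp [smul_eq_mul]

/-- CV `u = exp t - 1` -/
lemma cv_exp_sub_one (c : ℝ) (g : ℝ → ℝ) :
    ∫ v in Ioi (exp c - 1), g v = ∫ t in Ioi c, exp t * g (exp t - 1) := by
  have himg : (fun t : ℝ => exp t - 1) '' Ioi c = Ioi (exp c - 1) := by
    ext x
    simp only [mem_image, mem_Ioi]
    constructor
    · rintro ⟨t, ht, rfl⟩; have := Real.exp_lt_exp.mpr ht; linarith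
    · intro hx
      refine ⟨Real.log (x + 1), ?_, by rw [Real.exp_log (by nlinarith [exp_pos c])]; ring⟩
      rw [← Real.log_exp c]
      exact Real.log_lt_log (exp_pos c) (by linarith)
  rw [← himg,
    integral_image_eq_integral_abs_deriv_smul (f := fun t : ℝ => exp t - 1) measurableSet_Ioi
      (f' := fun t => exp t)
      (fun x _ => ((Real.hasDerivAt_exp x).sub_const 1).hasDerivWithinAt)
      (fun a _ b _ h => by
        simp only at h
        have : exp a = exp b := by linarith
        exact Real.exp_injective this) g]
  refine setIntegral_congr_fun measurableSet_Ioi fun u _ => ?_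
  rw [abs_of_pos (exp_pos _)]; simp [smul_eq_mul]

/-- the Frullani kernel -/
noncomputable def kern (a u : ℝ) : ℝ := (exp (-u) - exp (-(a * u))) / u

lemma kern_aesm (a : ℝ) : AEStronglyMeasurable (kern a) (volume.restrict (Ioi (0:ℝ))) := by
  apply Measurable.aestronglyMeasurable
  unfold kern
  fun_prop

lemma integrableOn_exp_neg_mul_Ioi {b c : ℝ} (hb : 0 < b) :
    IntegrableOn (fun u : ℝ => exp (-(b * u))) (Ioi c) := by
  simpa [neg_mul] using exp_neg_integrableOn_Ioi c hb

lemma kern_integrable {a : ℝ} (ha : 0 < a) : IntegrableOn (kern a) (Ioi (0:ℝ)) := by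
  refine integrableOn_Ioi_of_bounds (kern_aesm a) (C := |1 - a|)
    (fun u hu => ?_)
    ((integrableOn_exp_neg_mul_Ioi (b := 1) one_pos).add
      (integrableOn_exp_neg_mul_Ioi (b := a) ha)) (fun u hu => ?_)
  · rw [kern, abs_div, abs_of_pos hu.1, div_le_iff₀ hu.1]
    calc |exp (-u) - exp (-(a*u))| ≤ |u - a*u| :=
          abs_exp_neg_sub_exp_neg hu.1.le (mul_nonneg ha.le hu.1.le)
      _ = |1-a| * u := by
          rw [show u - a*u = (1-a)*u by ring, abs_mul, abs_of_pos hu.1]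
  · have hu1 : (1:ℝ) ≤ u := le_of_lt hu
    have hu0 : (0:ℝ) < u := lt_of_lt_of_le one_pos hu1
    rw [kern, abs_div, abs_of_pos hu0]
    have h1 : |exp (-u) - exp (-(a*u))| ≤ exp (-u) + exp (-(a*u)) := by
      rw [abs_sub_le_iff]
      constructor <;> nlinarith [exp_pos (-u), exp_pos (-(a*u))]
    have h2 : |exp (-u) - exp (-(a*u))| / u ≤ exp (-u) + exp (-(a*u)) := by
      rw [div_le_iff₀ hu0]
      nlinarith [abs_nonneg (exp (-u) - exp (-(a*u))), exp_pos (-u), exp_pos (-(a*u))]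
    simpa using h2


lemma integrableOn_phi_mul {a δ : ℝ} (ha : 0 < a) (hδ : 0 < δ) :
    IntegrableOn (fun v : ℝ => exp (-(a*v)) / v) (Ioi δ) := by
  refine Integrable.mono' ((integrableOn_exp_neg_mul_Ioi (b := a) (c := δ) ha).const_mul (1/δ))
    (Measurable.aestronglyMeasurable (by fun_prop)) ?_
  filter_upwards [ae_restrict_mem measurableSet_Ioi] with v hv
  have hδv : δ ≤ v := le_of_lt hv
  have hv0 : (0:ℝ) < v := lt_of_lt_of_le hδ hδv
  rw [Real.norm_eq_abs, abs_div, abs_of_pos (exp_pos _), abs_of_pos hv0, div_le_iff₀ hv0]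
  calc exp (-(a*v)) = (1/δ) * exp (-(a*v)) * δ := by field_simp
    _ ≤ 1/δ * exp (-(a*v)) * v := by gcongr

lemma integrableOn_phi {δ : ℝ} (hδ : 0 < δ) :
    IntegrableOn (fun v : ℝ => exp (-v) / v) (Ioi δ) := by
  have := integrableOn_phi_mul (a := 1) one_pos hδ
  simpa using this

lemma frullani_tail {a ε : ℝ} (ha : 0 < a) (hε : 0 < ε) :
    ∫ u in Ioi ε, kern a u = ∫ v in ε..(a*ε), exp (-v) / v := by
  have int1 := integrableOn_phi hε
  have int2 := integrableOn_phi_mul ha hε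
  have h1 : ∫ u in Ioi ε, kern a u
      = (∫ u in Ioi ε, exp (-u) / u) - ∫ u in Ioi ε, exp (-(a*u)) / u := by
    rw [← integral_sub int1 int2]
    exact setIntegral_congr_fun measurableSet_Ioi fun u _ => by
      rw [kern, sub_div]
  have h2 : ∫ u in Ioi ε, exp (-(a*u)) / u = ∫ v in Ioi (a*ε), exp (-v) / v := by
    rw [cv_const_mul ha]
    exact setIntegral_congr_fun measurableSet_Ioi fun u hu => by
      have hu0 : (0:ℝ) < u := lt_trans hε hu
      field_simp
  rw [h1, h2]
  exact integral_Ioi_sub_Ioi hε (by positivity)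
    (integrableOn_phi (lt_min hε (by positivity)))

lemma frullani {a : ℝ} (ha : 0 < a) :
    ∫ u in Ioi (0:ℝ), kern a u = Real.log a := by
  have h1 := tendsto_integral_Ioi_seq (kern_integrable ha)
  set E : ℕ → ℝ := fun n => ∫ v in (1/((n:ℝ)+1))..(a * (1/((n:ℝ)+1))), (exp (-v) - 1) / v
    with hE
  have key : ∀ n : ℕ, ∫ u in Ioi (1/((n:ℝ)+1)), kern a u = Real.log a + E n := by
    intro n
    set ε : ℝ := 1/((n:ℝ)+1) with hεdef
    have hε : (0:ℝ) < ε := by positivity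
    have hmin : (0:ℝ) < min ε (a*ε) := lt_min hε (by positivity)
    rw [frullani_tail ha hε]
    have hne : ∀ x ∈ [[ε, a*ε]], x ≠ 0 := fun x hx => by
      have h0x : (0:ℝ) < x := lt_of_lt_of_le hmin hx.1
      exact ne_of_gt h0x
    have hint1 : IntervalIntegrable (fun v : ℝ => 1/v) volume ε (a*ε) :=
      intervalIntegrable_one_div hne continuousOn_id
    have hint2 : IntervalIntegrable (fun v : ℝ => (exp (-v) - 1)/v) volume ε (a*ε) :=
      (((continuous_exp.comp continuous_neg).sub continuous_const).continuousOn.div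
        continuousOn_id hne).intervalIntegrable
    have hsplit : ∫ v in ε..(a*ε), exp (-v)/v = (∫ v in ε..(a*ε), 1/v) + E n := by
      rw [hE, ← intervalIntegral.integral_add hint1 hint2]
      apply intervalIntegral.integral_congr
      intro x hx
      have hx0 : x ≠ 0 := hne x hx
      field_simp
      ring
    have hlog : ∫ v in ε..(a*ε), 1/v = Real.log a := by
      rw [integral_one_div (fun h => hne 0 h rfl)]
      congr 1
      field_simp
    rw [hsplit, hlog]
  have hbound : ∀ n : ℕ, ‖E n‖ ≤ |a - 1| * (1/((n:ℝ)+1)) := by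
    intro n
    set ε : ℝ := 1/((n:ℝ)+1) with hεdef
    have hε : (0:ℝ) < ε := by positivity
    have hmin : (0:ℝ) < min ε (a*ε) := lt_min hε (by positivity)
    have := intervalIntegral.norm_integral_le_of_norm_le_const
      (C := 1) (f := fun v : ℝ => (exp (-v) - 1)/v) (a := ε) (b := a*ε) ?_
    · calc ‖E n‖ ≤ 1 * |a*ε - ε| := this
        _ = |a - 1| * ε := by
            rw [one_mul, show a*ε - ε = (a-1)*ε by ring, abs_mul, abs_of_pos hε]
    · intro x hx
      have h0x : (0:ℝ) < x := lt_of_lt_of_le hmin (le_of_lt hx.1)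
      rw [Real.norm_eq_abs, abs_div, abs_of_pos h0x, div_le_one h0x, abs_le]
      constructor
      · have := one_sub_exp_neg_le (u := x); linarith
      · have : exp (-x) ≤ 1 := exp_le_one_iff.mpr (by linarith)
        linarith
  have h2 : Tendsto (fun n : ℕ => Real.log a + E n) atTop (𝓝 (Real.log a)) := by
    have hE0 : Tendsto E atTop (𝓝 0) := by
      apply squeeze_zero_norm hbound
      have := tendsto_one_div_add_atTop_nhds_zero_nat.const_mul |a - 1|
      simpa using this
    simpa using tendsto_const_nhds.add hE0
  exact tendsto_nhds_unique h1 ((tendsto_congr key).mpr h2)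

/-- `G q u = exp (-(q*u)) / (1 - exp (-u))` -/
noncomputable def G (q u : ℝ) : ℝ := exp (-(q*u)) / (1 - exp (-u))
/-- `H q u = (1+u) ^ (-q) / u` -/
noncomputable def H (q u : ℝ) : ℝ := (1+u) ^ (-q) / u

lemma one_sub_exp_neg_pos {u : ℝ} (hu : 0 < u) : 0 < 1 - exp (-u) := by
  have := one_sub_exp_neg_ge hu.le
  nlinarith [exp_pos (-u)]

lemma G_nonneg {q u : ℝ} (hu : 0 < u) : 0 ≤ G q u :=
  div_nonneg (exp_pos _).le (one_sub_exp_neg_pos hu).le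

lemma G_le {q u : ℝ} (hq : 0 < q) (hu : 0 < u) (hu1 : u ≤ 1) : G q u ≤ exp 1 / u := by
  have h1 : u * exp (-1) ≤ 1 - exp (-u) := by
    calc u * exp (-1) ≤ u * exp (-u) := by
          have : exp (-u) ≥ exp (-1) := exp_le_exp.mpr (by linarith)
          nlinarith
      _ ≤ 1 - exp (-u) := one_sub_exp_neg_ge hu.le
  have h2 : exp (-(q*u)) ≤ 1 := exp_le_one_iff.mpr (by nlinarith)
  rw [G, div_le_div_iff₀ (one_sub_exp_neg_pos hu) hu]
  have hpe : (0:ℝ) < exp 1 := exp_pos 1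
  have he : exp (-1) * exp 1 = 1 := by rw [← exp_add]; simp
  nlinarith [one_sub_exp_neg_pos hu]

lemma G_aesm (q : ℝ) {s : Set ℝ} : AEStronglyMeasurable (G q) (volume.restrict s) := by
  apply Measurable.aestronglyMeasurable; unfold G; fun_prop

lemma H_aesm (q : ℝ) {s : Set ℝ} : AEStronglyMeasurable (H q) (volume.restrict s) := by
  apply Measurable.aestronglyMeasurable; unfold H
  apply Measurable.div _ measurable_id
  exact (measurable_const.add measurable_id).pow measurable_const

lemma G_integrableOn {q δ : ℝ} (hq : 0 < q) (hδ : 0 < δ) :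
    IntegrableOn (G q) (Ioi δ) := by
  refine Integrable.mono' ((integrableOn_exp_neg_mul_Ioi (b := q) (c := δ) hq).const_mul
    (1/(1 - exp (-δ)))) (G_aesm q) ?_
  filter_upwards [ae_restrict_mem measurableSet_Ioi] with u hu
  have huδ : δ < u := hu
  have h1 : 1 - exp (-δ) ≤ 1 - exp (-u) := by
    have : exp (-u) ≤ exp (-δ) := exp_le_exp.mpr (by linarith)
    linarith
  have h2 := one_sub_exp_neg_pos hδ
  rw [Real.norm_eq_abs, abs_of_nonneg (G_nonneg (lt_trans hδ huδ)), G]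
  rw [div_le_iff₀ (by linarith : (0:ℝ) < 1 - exp (-u))] at *
  calc exp (-(q*u)) = (1/(1 - exp (-δ)) * exp (-(q*u))) * (1 - exp (-δ)) := by field_simp
    _ ≤ 1/(1 - exp (-δ)) * exp (-(q*u)) * (1 - exp (-u)) := by gcongr

lemma H_le {q u : ℝ} (hq : 0 < q) (hu : 0 < u) : H q u ≤ u ^ (-q-1) := by
  have h1 : (1+u) ^ (-q) ≤ u ^ (-q) := rpow_le_rpow_of_nonpos hu (by linarith) (by linarith)
  rw [H, div_le_iff₀ hu, show -q-1 = -q + (-1) by ring, rpow_add hu, rpow_neg_one]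
  calc (1+u) ^ (-q) ≤ u ^ (-q) := h1
    _ = u ^ (-q) * u⁻¹ * u := by field_simp
    _ = _ := by ring

lemma H_nonneg {q u : ℝ} (hu : 0 < u) : 0 ≤ H q u :=
  div_nonneg (rpow_nonneg (by linarith) _) hu.le

lemma H_integrableOn {q δ : ℝ} (hq : 0 < q) (hδ : 0 < δ) :
    IntegrableOn (H q) (Ioi δ) := by
  refine Integrable.mono' (integrableOn_Ioi_rpow_of_lt (by linarith : -q-1 < -1) hδ) (H_aesm q) ?_
  filter_upwards [ae_restrict_mem measurableSet_Ioi] with u hu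
  have hu0 : (0:ℝ) < u := lt_trans hδ hu
  rw [Real.norm_eq_abs, abs_of_nonneg (H_nonneg hu0)]
  exact H_le hq hu0

/-- change of variables `u = exp t - 1` transfers `H` to `G` -/
lemma H_integral_eq {q ε : ℝ} (hq : 0 < q) (hε : 0 < ε) :
    ∫ u in Ioi ε, H q u = ∫ t in Ioi (Real.log (1+ε)), G q t := by
  have hc : exp (Real.log (1+ε)) - 1 = ε := by
    rw [Real.exp_log (by linarith)]; ring
  rw [← hc, cv_exp_sub_one (Real.log (1+ε)) (H q)]
  rw [hc]
  apply setIntegral_congr_fun measurableSet_Ioi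
  intro t ht
  have ht0 : 0 < t := lt_trans (Real.log_pos (by linarith)) ht
  have het : 1 < exp t := by rw [← Real.exp_zero]; exact exp_lt_exp.mpr ht0
  have h1 : (1:ℝ) + (exp t - 1) = exp t := by ring
  simp only [H, G, h1]
  rw [← Real.exp_mul, show t * -q = -(q*t) by ring]
  have h2 : (0:ℝ) < exp t - 1 := by linarith
  have h3 := one_sub_exp_neg_pos ht0
  have h4 : exp (-t) * exp t = 1 := by rw [← exp_add]; simp
  rw [mul_div_assoc'] at * <;> try skip
  rw [div_eq_div_iff h2.ne' h3.ne']
  nlinarith [exp_pos (-(q*t)), exp_pos (-t), exp_pos t]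

lemma GH_near_zero {q u : ℝ} (hq : 0 < q) (hu : u ∈ Ioc (0:ℝ) 1) :
    |G q u - H q u| ≤ exp 1 + q := by
  obtain ⟨hu0, hu1⟩ := hu
  set A : ℝ := 1 - exp (-u) with hA
  have hA0 : 0 < A := one_sub_exp_neg_pos hu0
  have hAu : A ≤ u := one_sub_exp_neg_le
  have hA1 : u * exp (-1) ≤ A := by
    calc u * exp (-1) ≤ u * exp (-u) := by
          have : exp (-1) ≤ exp (-u) := exp_le_exp.mpr (by linarith)
          nlinarith
      _ ≤ A := one_sub_exp_neg_ge hu0.le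
  have hNu : u - A ≤ u^2 := by
    have h := exp_neg_le_inv hu0.le
    have h10 : (0:ℝ) < 1 + u := by linarith
    have : u - A = u - 1 + exp (-u) := by rw [hA]; ring
    rw [this]
    have h2 : u - 1 + 1/(1+u) = u^2/(1+u) := by field_simp; ring
    have h3 : u^2/(1+u) ≤ u^2 := by
      rw [div_le_iff₀ h10]
      nlinarith [sq_nonneg u]
    linarith
  -- decomposition
  have hdecomp : G q u - H q u
      = exp (-(q*u)) * (1/A - 1/u) + (exp (-(q*u)) - (1+u) ^ (-q)) / u := by
    rw [G, H, ← hA]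
    field_simp
    ring
  have hT1 : |exp (-(q*u)) * (1/A - 1/u)| ≤ exp 1 := by
    have hD0 : 0 ≤ 1/A - 1/u := by
      rw [sub_nonneg, div_le_div_iff₀ hu0 hA0]
      linarith
    have hDe : 1/A - 1/u ≤ exp 1 := by
      have heq : 1/A - 1/u = (u - A)/(A*u) := by field_simp; try ring
      rw [heq, div_le_iff₀ (by positivity)]
      have hee : exp (-1) * exp 1 = 1 := by rw [← exp_add]; simp
      nlinarith [mul_le_mul_of_nonneg_left hA1 (mul_pos (exp_pos 1) hu0).le]
    have he1 : exp (-(q*u)) ≤ 1 := exp_le_one_iff.mpr (by nlinarith)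
    rw [abs_mul, abs_of_pos (exp_pos _), abs_of_nonneg hD0]
    nlinarith [exp_pos (-(q*u))]
  have hT2 : |(exp (-(q*u)) - (1+u) ^ (-q)) / u| ≤ q := by
    have hL0 : 0 ≤ Real.log (1+u) := Real.log_nonneg (by linarith)
    have hrw : (1+u) ^ (-q) = exp (-(q * Real.log (1+u))) := by
      rw [rpow_def_of_pos (by linarith : (0:ℝ) < 1+u)]
      ring_nf
    rw [abs_div, abs_of_pos hu0, div_le_iff₀ hu0, hrw]
    calc |exp (-(q*u)) - exp (-(q * Real.log (1+u)))| ≤ |q*u - q*Real.log (1+u)| :=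
          abs_exp_neg_sub_exp_neg (by positivity) (by positivity)
      _ ≤ q * u := by
          have h1 := log_add_one_le hu0.le
          have h2 := le_log_add_one hu0.le
          rw [abs_of_nonneg (by nlinarith)]
          have h3 : u / (1+u) ≤ Real.log (1+u) := h2
          rw [div_le_iff₀ (by linarith : (0:ℝ) < 1+u)] at h3
          nlinarith
  calc |G q u - H q u| ≤ |exp (-(q*u)) * (1/A - 1/u)|
        + |(exp (-(q*u)) - (1+u) ^ (-q)) / u| := by rw [hdecomp]; exact abs_add_le _ _
    _ ≤ exp 1 + q := add_le_add hT1 hT2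

lemma GH_integrableOn {q : ℝ} (hq : 0 < q) :
    IntegrableOn (fun u => G q u - H q u) (Ioi (0:ℝ)) := by
  refine integrableOn_Ioi_of_bounds ((G_aesm q).sub (H_aesm q)) (C := exp 1 + q)
    (fun u hu => GH_near_zero hq hu)
    (g := fun u => (1/(1 - exp (-1))) * exp (-(q*u)) + u ^ (-q-1))
    (((integrableOn_exp_neg_mul_Ioi (b := q) hq).const_mul _).add
      (integrableOn_Ioi_rpow_of_lt (by linarith) one_pos)) ?_
  intro u hu
  have hu1 : (1:ℝ) < u := hu
  have hu0 : (0:ℝ) < u := by linarith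
  have hG : G q u ≤ (1/(1 - exp (-1))) * exp (-(q*u)) := by
    have h1 : 1 - exp (-1) ≤ 1 - exp (-u) := by
      have : exp (-u) ≤ exp (-1) := exp_le_exp.mpr (by linarith)
      linarith
    have h2 := one_sub_exp_neg_pos (one_pos (α := ℝ))
    rw [G, div_le_iff₀ (by linarith : (0:ℝ) < 1 - exp (-u))]
    calc exp (-(q*u)) = (1/(1 - exp (-1)) * exp (-(q*u))) * (1 - exp (-1)) := by field_simp
      _ ≤ _ := by gcongr
  have habs : |G q u - H q u| ≤ G q u + H q u := by
    rw [abs_sub_le_iff]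
    constructor
    · have := H_nonneg (q := q) hu0; linarith
    · have := G_nonneg (q := q) hu0; linarith
  calc |G q u - H q u| ≤ G q u + H q u := habs
    _ ≤ (1/(1 - exp (-1))) * exp (-(q*u)) + u ^ (-q-1) :=
        add_le_add hG (H_le hq hu0)

lemma crux {q : ℝ} (hq : 0 < q) :
    ∫ u in Ioi (0:ℝ), (G q u - H q u) = 0 := by
  have h1 := tendsto_integral_Ioi_seq (GH_integrableOn hq)
  have key : ∀ n : ℕ, ‖∫ u in Ioi (1/((n:ℝ)+1)), (G q u - H q u)‖ ≤ exp 1 * (1/((n:ℝ)+1)) := by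
    intro n
    set ε : ℝ := 1/((n:ℝ)+1) with hεdef
    have hε : (0:ℝ) < ε := by positivity
    have hε1 : ε ≤ 1 := by
      rw [hεdef, div_le_one (by positivity)]
      simp
    set L : ℝ := Real.log (1+ε) with hL
    have hL0 : 0 < L := Real.log_pos (by linarith)
    have hLε : L ≤ ε := log_add_one_le hε.le
    have hLlow : ε / (1+ε) ≤ L := le_log_add_one hε.le
    have hsplit : ∫ u in Ioi ε, (G q u - H q u) = ∫ x in ε..L, G q x := by
      rw [integral_sub (G_integrableOn hq hε) (H_integrableOn hq hε),
        H_integral_eq hq hε, ← hL]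
      exact integral_Ioi_sub_Ioi hε hL0 (by
        rw [min_eq_right hLε]; exact G_integrableOn hq hL0)
    rw [hsplit]
    have hbound := intervalIntegral.norm_integral_le_of_norm_le_const
      (C := exp 1 / L) (f := G q) (a := ε) (b := L) ?_
    · calc ‖∫ x in ε..L, G q x‖ ≤ exp 1 / L * |L - ε| := hbound
        _ ≤ exp 1 * ε := by
            rw [abs_of_nonpos (by linarith), div_mul_eq_mul_div, div_le_iff₀ hL0]
            have h3 : ε - L ≤ ε * L := by
              rw [div_le_iff₀ (by linarith : (0:ℝ) < 1+ε)] at hLlow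
              nlinarith
            nlinarith [exp_pos 1]
    · intro x hx
      have hx1 : min ε L < x := hx.1
      have hx2 : x ≤ max ε L := hx.2
      rw [min_eq_right hLε] at hx1
      rw [max_eq_left hLε] at hx2
      have hx0 : 0 < x := lt_trans hL0 hx1
      rw [Real.norm_eq_abs, abs_of_nonneg (G_nonneg hx0)]
      calc G q x ≤ exp 1 / x := G_le hq hx0 (le_trans hx2 hε1)
        _ ≤ exp 1 / L := by gcongr <;> exact hx1.le
  have h2 : Tendsto (fun n : ℕ => ∫ u in Ioi (1/((n:ℝ)+1)), (G q u - H q u)) atTop (𝓝 0) := by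
    apply squeeze_zero_norm key
    have := tendsto_one_div_add_atTop_nhds_zero_nat.const_mul (exp 1)
    simpa using this
  exact tendsto_nhds_unique h1 h2

/-- the Gauss kernel `R q u = (exp (-u) - (1+u)^(-q)) / u` -/
noncomputable def R (q u : ℝ) : ℝ := (exp (-u) - (1+u) ^ (-q)) / u

lemma R_aesm (q : ℝ) {s : Set ℝ} : AEStronglyMeasurable (R q) (volume.restrict s) := by
  apply Measurable.aestronglyMeasurable; unfold R
  apply Measurable.div _ measurable_id
  exact (measurable_exp.comp measurable_neg).sub
    ((measurable_const.add measurable_id).pow measurable_const)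

lemma rpow_neg_le {q u : ℝ} (hq : 0 < q) (hu : 0 < u) : (1+u) ^ (-q) ≤ u ^ (-q) :=
  rpow_le_rpow_of_nonpos hu (by linarith) (by linarith)

lemma R_abs_near {q u : ℝ} (hq : 0 < q) (hu0 : 0 < u) : |R q u| ≤ 1 + q := by
  have hL0 : 0 ≤ Real.log (1+u) := Real.log_nonneg (by linarith)
  have hrw : (1+u) ^ (-q) = exp (-(q * Real.log (1+u))) := by
    rw [rpow_def_of_pos (by linarith : (0:ℝ) < 1+u)]; ring_nf
  rw [R, abs_div, abs_of_pos hu0, div_le_iff₀ hu0, hrw]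
  calc |exp (-u) - exp (-(q * Real.log (1+u)))| ≤ |u - q * Real.log (1+u)| :=
        abs_exp_neg_sub_exp_neg hu0.le (by positivity)
    _ ≤ (1 + q) * u := by
        have h1 := log_add_one_le hu0.le
        rw [abs_le]
        constructor <;> nlinarith

lemma R_integrableOn {q : ℝ} (hq : 0 < q) : IntegrableOn (R q) (Ioi (0:ℝ)) := by
  refine integrableOn_Ioi_of_bounds (R_aesm q) (C := 1 + q)
    (fun u hu => R_abs_near hq hu.1)
    (g := fun u => exp (-(1*u)) + u ^ (-q-1))
    ((integrableOn_exp_neg_mul_Ioi one_pos).add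
      (integrableOn_Ioi_rpow_of_lt (by linarith) one_pos)) ?_
  intro u hu
  have hu1 : (1:ℝ) < u := hu
  have hu0 : (0:ℝ) < u := by linarith
  have h1 : (1+u) ^ (-q) ≤ u ^ (-q) := rpow_neg_le hq hu0
  have h2 : (0:ℝ) ≤ (1+u) ^ (-q) := rpow_nonneg (by linarith) _
  rw [R, abs_div, abs_of_pos hu0, div_le_iff₀ hu0]
  have h3 : |exp (-u) - (1+u) ^ (-q)| ≤ exp (-u) + u ^ (-q) := by
    rw [abs_sub_le_iff]
    constructor <;> nlinarith [exp_pos (-u), rpow_nonneg hu0.le (-q)]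
  calc |exp (-u) - (1+u) ^ (-q)| ≤ exp (-u) + u ^ (-q) := h3
    _ ≤ (exp (-(1*u)) + u ^ (-q-1)) * u := by
        rw [one_mul, add_mul]
        have h4 : u ^ (-q-1) * u = u ^ (-q) := by
          rw [← rpow_add_one hu0.ne' (-q-1)]; ring_nf
        have h5 : exp (-u) ≤ exp (-u) * u := by nlinarith [exp_pos (-u)]
        rw [h4]
        linarith

/-- The integrand for the Fubini swap -/
noncomputable def F (q : ℝ) (z : ℝ × ℝ) : ℝ := z.1 ^ (q-1) * exp (-z.1) * kern z.1 z.2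

lemma F_measurable (q : ℝ) : Measurable (F q) := by
  unfold F kern
  apply Measurable.mul
  · exact (measurable_fst.pow measurable_const).mul (measurable_fst.neg.exp)
  · apply Measurable.div _ measurable_snd
    exact (measurable_snd.neg.exp).sub ((measurable_fst.mul measurable_snd).neg.exp)

lemma kern_abs_le_near {a u : ℝ} (ha : 0 ≤ a) (hu : 0 < u) : |kern a u| ≤ 1 + a := by
  rw [kern, abs_div, abs_of_pos hu, div_le_iff₀ hu]
  calc |exp (-u) - exp (-(a*u))| ≤ |u - a*u| :=
        abs_exp_neg_sub_exp_neg hu.le (by positivity)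
    _ ≤ (1+a) * u := by
        rw [abs_le]; constructor <;> nlinarith

lemma kern_abs_le_far {a u : ℝ} (hu : 0 < u) :
    |kern a u| ≤ (exp (-u) + exp (-(a*u))) / u := by
  rw [kern, abs_div, abs_of_pos hu]
  gcongr
  rw [abs_sub_le_iff]
  constructor <;> nlinarith [exp_pos (-u), exp_pos (-(a*u))]

lemma integrableOn_gamma_mul {q r : ℝ} (hq : 0 < q) (hr : 1 ≤ r) :
    IntegrableOn (fun t : ℝ => t ^ (q-1) * exp (-(r*t))) (Ioi (0:ℝ)) := by
  refine Integrable.mono' (Real.GammaIntegral_convergent hq)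
    (Measurable.aestronglyMeasurable (by fun_prop)) ?_
  filter_upwards [ae_restrict_mem measurableSet_Ioi] with t ht
  have ht0 : (0:ℝ) < t := ht
  rw [Real.norm_eq_abs, abs_mul, abs_of_nonneg (rpow_nonneg ht0.le _),
    abs_of_pos (exp_pos _)]
  rw [mul_comm (exp (-t)) (t ^ (q-1))]
  gcongr
  · nlinarith

lemma F_decomp {q t u : ℝ} (ht : 0 < t) (hu : 0 < u) :
    F q (t,u) = (exp (-u)/u) * (exp (-t) * t ^ (q-1))
      - (1/u) * (t ^ (q-1) * exp (-((1+u)*t))) := by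
  have hee : exp (-((1+u)*t)) = exp (-t) * exp (-(t*u)) := by
    rw [← exp_add]; ring_nf
  simp only [F, kern, hee]
  field_simp

lemma one_div_rpow_eq {q u : ℝ} (hu : 0 < u) :
    ((1/(1+u)) : ℝ) ^ q = (1+u) ^ (-q) := by
  rw [one_div, Real.inv_rpow (by linarith), Real.rpow_neg (by linarith)]

lemma integral_F_t {q u : ℝ} (hq : 0 < q) (hu : 0 < u) :
    ∫ t in Ioi (0:ℝ), F q (t, u) = Real.Gamma q * R q u := by
  have h1u : (1:ℝ) ≤ 1 + u := by linarith
  have e1 : IntegrableOn (fun t : ℝ => (exp (-u)/u) * (exp (-t) * t ^ (q-1))) (Ioi 0) :=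
    (Real.GammaIntegral_convergent hq).const_mul _
  have e2 : IntegrableOn (fun t : ℝ => (1/u) * (t ^ (q-1) * exp (-((1+u)*t)))) (Ioi 0) :=
    (integrableOn_gamma_mul hq h1u).const_mul _
  rw [setIntegral_congr_fun measurableSet_Ioi (fun t ht => F_decomp (q := q) ht hu),
    integral_sub e1 e2, MeasureTheory.integral_const_mul, MeasureTheory.integral_const_mul,
    ← Real.Gamma_eq_integral hq,
    Real.integral_rpow_mul_exp_neg_mul_Ioi hq (by linarith : (0:ℝ) < 1+u),
    one_div_rpow_eq hu, R]
  field_simp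

lemma integral_F_u {q t : ℝ} (ht : 0 < t) :
    ∫ u in Ioi (0:ℝ), F q (t, u) = t ^ (q-1) * (Real.log t * exp (-t)) := by
  have : ∀ u : ℝ, F q (t,u) = (t ^ (q-1) * exp (-t)) * kern t u := fun u => rfl
  simp only [this]
  rw [MeasureTheory.integral_const_mul, frullani ht]
  ring

lemma F_prod_integrable {q : ℝ} (hq : 0 < q) :
    Integrable (F q) ((volume.restrict (Ioi (0:ℝ))).prod (volume.restrict (Ioi (0:ℝ)))) := by
  rw [Measure.prod_restrict]
  have hsplit : (Ioi (0:ℝ)) ×ˢ (Ioi (0:ℝ))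
      = (Ioi (0:ℝ)) ×ˢ (Ioc (0:ℝ) 1) ∪ (Ioi (0:ℝ)) ×ˢ (Ioi (1:ℝ)) := by
    rw [← prod_union, Ioc_union_Ioi_eq_Ioi zero_le_one]
  show IntegrableOn (F q) ((Ioi (0:ℝ)) ×ˢ (Ioi (0:ℝ))) (volume.prod volume)
  rw [hsplit, integrableOn_union]
  constructor
  · -- near part : u ∈ Ioc 0 1
    rw [IntegrableOn, ← Measure.prod_restrict]
    have hβ : Integrable (fun z : ℝ × ℝ =>
        (exp (-z.1) * z.1 ^ (q-1) + exp (-z.1) * z.1 ^ (q+1-1)) * (1:ℝ))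
        ((volume.restrict (Ioi (0:ℝ))).prod (volume.restrict (Ioc (0:ℝ) 1))) := by
      exact Integrable.mul_prod
        (f := fun t : ℝ => exp (-t) * t ^ (q-1) + exp (-t) * t ^ (q+1-1))
        (g := fun _ : ℝ => (1:ℝ))
        ((Real.GammaIntegral_convergent hq).add
          (Real.GammaIntegral_convergent (by linarith : (0:ℝ) < q+1)))
        (integrableOn_const measure_Ioc_lt_top.ne)
    refine Integrable.mono' hβ ((F_measurable q).aestronglyMeasurable) ?_
    rw [Measure.prod_restrict]
    filter_upwards [ae_restrict_mem (measurableSet_Ioi.prod measurableSet_Ioc)] with z hz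
    obtain ⟨hz1, hz2⟩ := hz
    have ht0 : (0:ℝ) < z.1 := hz1
    have hu0 : (0:ℝ) < z.2 := hz2.1
    have hk : |kern z.1 z.2| ≤ 1 + z.1 := kern_abs_le_near ht0.le hu0
    have hrnn : (0:ℝ) ≤ z.1 ^ (q-1) * exp (-z.1) :=
      mul_nonneg (rpow_nonneg ht0.le _) (exp_pos _).le
    rw [Real.norm_eq_abs, F, abs_mul, abs_of_nonneg hrnn, mul_one]
    calc z.1 ^ (q-1) * exp (-z.1) * |kern z.1 z.2|
        ≤ z.1 ^ (q-1) * exp (-z.1) * (1 + z.1) := by gcongr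
      _ = exp (-z.1) * z.1 ^ (q-1) + exp (-z.1) * z.1 ^ (q+1-1) := by
          rw [show q+1-1 = (q-1)+1 by ring, rpow_add_one ht0.ne']
          ring
  · -- far part : u ∈ Ioi 1
    rw [IntegrableOn, ← Measure.prod_restrict]
    rw [integrable_prod_iff' ((F_measurable q).aestronglyMeasurable)]
    constructor
    · filter_upwards [ae_restrict_mem measurableSet_Ioi] with u hu
      have hu1 : (1:ℝ) < u := hu
      have hu0 : (0:ℝ) < u := by linarith
      have e1 : IntegrableOn (fun t : ℝ => (exp (-u)/u) * (exp (-t) * t ^ (q-1))) (Ioi 0) :=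
        (Real.GammaIntegral_convergent hq).const_mul _
      have e2 : IntegrableOn (fun t : ℝ => (1/u) * (t ^ (q-1) * exp (-((1+u)*t)))) (Ioi 0) :=
        (integrableOn_gamma_mul hq (by linarith)).const_mul _
      refine (e1.sub e2).congr ?_
      filter_upwards [ae_restrict_mem measurableSet_Ioi] with t ht
      exact (F_decomp ht hu0).symm
    · refine Integrable.mono'
        (g := fun u : ℝ => Real.Gamma q * exp (-(1*u)) + Real.Gamma q * u ^ (-q-1))
        (((integrableOn_exp_neg_mul_Ioi one_pos).const_mul _).add
          ((integrableOn_Ioi_rpow_of_lt (by linarith) one_pos).const_mul _))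
        (((F_measurable q).norm.stronglyMeasurable.integral_prod_left').aestronglyMeasurable) ?_
      filter_upwards [ae_restrict_mem measurableSet_Ioi] with u hu
      have hu1 : (1:ℝ) < u := hu
      have hu0 : (0:ℝ) < u := by linarith
      have e1 : IntegrableOn (fun t : ℝ => (exp (-u)/u) * (exp (-t) * t ^ (q-1))) (Ioi 0) :=
        (Real.GammaIntegral_convergent hq).const_mul _
      have e2 : IntegrableOn (fun t : ℝ => (1/u) * (t ^ (q-1) * exp (-((1+u)*t)))) (Ioi 0) :=
        (integrableOn_gamma_mul hq (by linarith)).const_mul _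
      have hmono : ∫ t in Ioi (0:ℝ), ‖F q (t, u)‖
          ≤ ∫ t in Ioi (0:ℝ), ((exp (-u)/u) * (exp (-t) * t ^ (q-1))
            + (1/u) * (t ^ (q-1) * exp (-((1+u)*t)))) := by
        refine integral_mono_of_nonneg (Eventually.of_forall fun t => norm_nonneg _)
          (e1.add e2) ?_
        filter_upwards [ae_restrict_mem measurableSet_Ioi] with t ht
        have ht0 : (0:ℝ) < t := ht
        have hee : exp (-((1+u)*t)) = exp (-t) * exp (-(t*u)) := by
          rw [← exp_add]; ring_nf
        have hrnn : (0:ℝ) ≤ t ^ (q-1) * exp (-t) :=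
          mul_nonneg (rpow_nonneg ht0.le _) (exp_pos _).le
        rw [Real.norm_eq_abs, F, abs_mul, abs_of_nonneg hrnn]
        calc t ^ (q-1) * exp (-t) * |kern t u|
            ≤ t ^ (q-1) * exp (-t) * ((exp (-u) + exp (-(t*u))) / u) := by
              gcongr
              exact kern_abs_le_far hu0
          _ = (exp (-u)/u) * (exp (-t) * t ^ (q-1))
              + (1/u) * (t ^ (q-1) * exp (-((1+u)*t))) := by
              rw [hee]; field_simp
      have hval : ∫ t in Ioi (0:ℝ), ((exp (-u)/u) * (exp (-t) * t ^ (q-1))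
            + (1/u) * (t ^ (q-1) * exp (-((1+u)*t))))
          = (exp (-u)/u) * Real.Gamma q + (1/u) * ((1+u) ^ (-q) * Real.Gamma q) := by
        rw [integral_add e1 e2, MeasureTheory.integral_const_mul, MeasureTheory.integral_const_mul,
          ← Real.Gamma_eq_integral hq,
          Real.integral_rpow_mul_exp_neg_mul_Ioi hq (by linarith : (0:ℝ) < 1+u),
          one_div_rpow_eq hu0]
      have hΓ : (0:ℝ) < Real.Gamma q := Real.Gamma_pos_of_pos hq
      have hfinal : (exp (-u)/u) * Real.Gamma q + (1/u) * ((1+u) ^ (-q) * Real.Gamma q)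
          ≤ Real.Gamma q * exp (-(1*u)) + Real.Gamma q * u ^ (-q-1) := by
        have hb1 : exp (-u)/u ≤ exp (-(1*u)) := by
          rw [one_mul, div_le_iff₀ hu0]
          nlinarith [exp_pos (-u)]
        have hb2 : (1/u) * (1+u) ^ (-q) ≤ u ^ (-q-1) := by
          have h1 : (1+u) ^ (-q) ≤ u ^ (-q) := rpow_neg_le hq hu0
          have h2 : (1/u) * u ^ (-q) = u ^ (-q-1) := by
            rw [show -q-1 = -q + (-1) by ring, rpow_add hu0, rpow_neg_one]
            ring
          calc (1/u) * (1+u) ^ (-q) ≤ (1/u) * u ^ (-q) := by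
                gcongr
            _ = u ^ (-q-1) := h2
        have hb2' : (1/u) * ((1+u) ^ (-q) * Real.Gamma q) ≤ Real.Gamma q * u ^ (-q-1) := by
          calc (1/u) * ((1+u) ^ (-q) * Real.Gamma q)
              = ((1/u) * (1+u) ^ (-q)) * Real.Gamma q := by ring
            _ ≤ u ^ (-q-1) * Real.Gamma q := by gcongr
            _ = Real.Gamma q * u ^ (-q-1) := by ring
        nlinarith
      have hnn : (0:ℝ) ≤ ∫ t in Ioi (0:ℝ), ‖F q (t, u)‖ :=
        integral_nonneg fun t => norm_nonneg _
      rw [Real.norm_eq_abs, abs_of_nonneg hnn]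
      linarith

lemma gauss_repr {q : ℝ} (hq : 0 < q) :
    Real.Gamma q * ∫ u in Ioi (0:ℝ), R q u
      = ∫ t in Ioi (0:ℝ), t ^ (q-1) * (Real.log t * exp (-t)) := by
  have hswap := MeasureTheory.integral_integral_swap
    (μ := volume.restrict (Ioi (0:ℝ))) (ν := volume.restrict (Ioi (0:ℝ)))
    (f := fun t u => F q (t, u)) (F_prod_integrable hq)
  have hL : ∫ t in Ioi (0:ℝ), (∫ u in Ioi (0:ℝ), F q (t, u))
      = ∫ t in Ioi (0:ℝ), t ^ (q-1) * (Real.log t * exp (-t)) :=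
    setIntegral_congr_fun measurableSet_Ioi fun t ht => integral_F_u ht
  have hR : ∫ u in Ioi (0:ℝ), (∫ t in Ioi (0:ℝ), F q (t, u))
      = Real.Gamma q * ∫ u in Ioi (0:ℝ), R q u := by
    rw [setIntegral_congr_fun measurableSet_Ioi fun u hu => integral_F_t hq hu,
      MeasureTheory.integral_const_mul]
  rw [← hL, ← hR, hswap]

lemma hasDerivAt_realGamma {q : ℝ} (hq : 0 < q) :
    HasDerivAt Real.Gamma (∫ t in Ioi (0:ℝ), t ^ (q-1) * (Real.log t * exp (-t))) q := by
  have hre : (0:ℝ) < (Complex.ofReal q).re := by simpa using hq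
  have hC : HasDerivAt Complex.Gamma
      (∫ t : ℝ in Ioi 0, (t:ℂ) ^ ((q:ℂ) - 1) * (Real.log t * Real.exp (-t))) (q:ℂ) := by
    refine (Complex.hasDerivAt_GammaIntegral hre).congr_of_eventuallyEq ?_
    have hopen : IsOpen {z : ℂ | 0 < z.re} := isOpen_lt continuous_const Complex.continuous_re
    filter_upwards [hopen.mem_nhds hre] with z hz
    exact Complex.Gamma_eq_integral hz
  have hcast : (∫ t : ℝ in Ioi 0, (t:ℂ) ^ ((q:ℂ) - 1) * (Real.log t * Real.exp (-t)))
      = ((∫ t in Ioi (0:ℝ), t ^ (q-1) * (Real.log t * exp (-t)) : ℝ) : ℂ) := by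
    have h1 : ∫ t : ℝ in Ioi 0, (t:ℂ) ^ ((q:ℂ) - 1) * (Real.log t * Real.exp (-t))
        = ∫ t : ℝ in Ioi 0, ((t ^ (q-1) * (Real.log t * exp (-t)) : ℝ) : ℂ) := by
      refine setIntegral_congr_fun measurableSet_Ioi fun t ht => ?_
      push_cast
      rw [Complex.ofReal_cpow (le_of_lt ht)]
      push_cast
      ring
    rw [h1]
    exact _root_.integral_ofReal
  have := hC.real_of_complex
  rw [hcast] at this
  simpa [Complex.Gamma_ofReal] using this

lemma digamma_eq {q : ℝ} (hq : 0 < q) :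
    digamma q = (∫ t in Ioi (0:ℝ), t ^ (q-1) * (Real.log t * exp (-t))) / Real.Gamma q := by
  rw [digamma, (hasDerivAt_realGamma hq).deriv]

lemma transform {p q : ℝ} :
    ∫ x in (0:ℝ)..1, (x ^ (p - 1) / Real.log x + x ^ (q - 1) / (1 - x))
      = ∫ u in Ioi (0:ℝ), (G q u - exp (-(p*u))/u) := by
  rw [intervalIntegral.integral_of_le zero_le_one, MeasureTheory.integral_Ioc_eq_integral_Ioo,
    cv_exp_neg (fun x => x ^ (p - 1) / Real.log x + x ^ (q - 1) / (1 - x))]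
  refine setIntegral_congr_fun measurableSet_Ioi fun u hu => ?_
  have hu0 : (0:ℝ) < u := hu
  have h1 : Real.log (exp (-u)) = -u := Real.log_exp _
  have h2 : exp (-u) ^ (p-1) = exp ((-u)*(p-1)) := (Real.exp_mul _ _).symm
  have h3 : exp (-u) ^ (q-1) = exp ((-u)*(q-1)) := (Real.exp_mul _ _).symm
  simp only [h1, h2, h3, G]
  have h4 : exp (-u) * exp ((-u)*(p-1)) = exp (-(p*u)) := by rw [← exp_add]; ring_nf
  have h5 : exp (-u) * exp ((-u)*(q-1)) = exp (-(q*u)) := by rw [← exp_add]; ring_nf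
  have h6 : (0:ℝ) < 1 - exp (-u) := by
    have : exp (-u) < 1 := exp_lt_one_iff.mpr (by linarith)
    linarith
  rw [mul_add, mul_div_assoc', mul_div_assoc', h4, h5]
  rw [div_neg]
  ring

lemma pointwise_decomp {p q u : ℝ} :
    G q u - exp (-(p*u))/u = (G q u - H q u) - R q u + kern p u := by
  simp only [H, R, kern]
  ring
end DigammaAux

open DigammaAux in
theorem integral_rpow_div_log_add_rpow_div_one_sub (p q : ℝ) (hp : 0 < p) (hq : 0 < q) :
    ∫ x in (0 : ℝ)..1, (x ^ (p - 1) / Real.log x + x ^ (q - 1) / (1 - x))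
      = Real.log p - digamma q := by
  rw [transform, setIntegral_congr_fun measurableSet_Ioi
      (fun u _ => pointwise_decomp (p := p) (q := q))]
  have i1 : IntegrableOn (fun u : ℝ => G q u - H q u - R q u) (Ioi (0:ℝ)) :=
    (GH_integrableOn hq).sub (R_integrableOn hq)
  have hsplit1 : (∫ u in Ioi (0:ℝ), (G q u - H q u - R q u + kern p u))
      = (∫ u in Ioi (0:ℝ), (G q u - H q u - R q u)) + ∫ u in Ioi (0:ℝ), kern p u :=
    integral_add i1 (kern_integrable hp)
  have hsplit2 : (∫ u in Ioi (0:ℝ), (G q u - H q u - R q u))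
      = (∫ u in Ioi (0:ℝ), (G q u - H q u)) - ∫ u in Ioi (0:ℝ), R q u :=
    integral_sub (GH_integrableOn hq) (R_integrableOn hq)
  rw [hsplit1, hsplit2, crux hq, frullani hp]
  have hΓ : Real.Gamma q ≠ 0 := (Real.Gamma_pos_of_pos hq).ne'
  have hR : ∫ u in Ioi (0:ℝ), R q u = digamma q := by
    rw [digamma_eq hq, ← gauss_repr hq]
    field_simp
  rw [hR]
  ring
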